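/- Let σ ∈ Sₙ be a product of r pairwise disjoint cycles of lengths k₁,…,k_r (each kᵢ ≥ 2) with k₁ + ⋯ + k_r = n. For any d ≥ 1, if σ⁻¹ is written as a product of 3-cycles in S_{n+d}, each moving at least one of the d outsiders, then the number of 3-cycles in the product is at least (n+r)/2. -/

import Mathlib

open Equiv Equiv.Perm Finset

set_option linter.unusedSectionVars false

namespace Stmt17Aux

variable {α : Type*} [Fintype α] [DecidableEq α]

lemma sc_iff_pow {π : Equiv.Perm α} {y z : α} :
    π.SameCycle y z ↔ ∃ k : ℕ, (π ^ k) y = z := by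
  constructor
  · intro h
    obtain ⟨i, _, h⟩ := h.exists_pow_eq'
    exact ⟨i, h⟩
  · rintro ⟨k, rfl⟩
    exact ⟨(k : ℤ), by rw [zpow_natCast]⟩

def orb (π : Equiv.Perm α) (y : α) : Finset α :=
  Finset.univ.filter (fun z => π.SameCycle y z)

lemma mem_orb {π : Equiv.Perm α} {y z : α} : z ∈ orb π y ↔ π.SameCycle y z := by
  simp [orb]

lemma self_mem_orb (π : Equiv.Perm α) (y : α) : y ∈ orb π y :=
  mem_orb.2 (Equiv.Perm.SameCycle.refl _ _)

lemma orb_eq_of_sc {π : Equiv.Perm α} {y z : α} (h : π.SameCycle y z) :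
    orb π y = orb π z := by
  ext w
  simp only [mem_orb]
  exact ⟨fun hw => h.symm.trans hw, fun hw => h.trans hw⟩

def gcount (π : Equiv.Perm α) : ℕ := (Finset.univ.image (orb π)).card

lemma traj {π : Equiv.Perm α} {a x y : α} {k : ℕ}
    (h : ∀ i < k, (π ^ i) y ≠ a ∧ (π ^ i) y ≠ x) :
    ((π * Equiv.swap a x) ^ k) y = (π ^ k) y := by
  induction k with
  | zero => rfl
  | succ k ih =>
    have hk : ∀ i < k, (π ^ i) y ≠ a ∧ (π ^ i) y ≠ x :=
      fun i hi => h i (hi.trans (Nat.lt_succ_self k))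
    have hkk := h k (Nat.lt_succ_self k)
    rw [pow_succ', pow_succ']
    simp only [Equiv.Perm.mul_apply]
    rw [ih hk, Equiv.swap_apply_of_ne_of_ne hkk.1 hkk.2]

lemma orb_mul_swap_of_not_mem {π : Equiv.Perm α} {a x y : α}
    (ha : ¬ π.SameCycle y a) (hx : ¬ π.SameCycle y x) :
    orb (π * Equiv.swap a x) y = orb π y := by
  have key : ∀ k : ℕ, ((π * Equiv.swap a x) ^ k) y = (π ^ k) y := by
    intro k
    refine traj fun i _ => ⟨fun h => ha ⟨(i : ℤ), by rw [zpow_natCast, h]⟩,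
      fun h => hx ⟨(i : ℤ), by rw [zpow_natCast, h]⟩⟩
  ext z
  simp only [mem_orb, sc_iff_pow, key]

/-- From any point of the orbit of `a`, under `π * swap a x` we can reach `a` or `x`. -/
lemma reach {π : Equiv.Perm α} {a x y : α} (hy : π.SameCycle a y) :
    (π * Equiv.swap a x).SameCycle a y ∨ (π * Equiv.swap a x).SameCycle x y := by
  obtain ⟨k, hk⟩ := sc_iff_pow.1 hy.symm
  have hex : ∃ m : ℕ, (π ^ m) y = a ∨ (π ^ m) y = x := ⟨k, Or.inl hk⟩
  classical
  set m := Nat.find hex with hm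
  have hmin : ∀ i < m, (π ^ i) y ≠ a ∧ (π ^ i) y ≠ x := by
    intro i hi
    have := Nat.find_min hex hi
    tauto
  have htr := traj (π := π) (a := a) (x := x) (y := y) hmin
  rcases Nat.find_spec hex with h | h
  · left
    exact (sc_iff_pow.2 ⟨m, htr.trans h⟩).symm
  · right
    exact (sc_iff_pow.2 ⟨m, htr.trans h⟩).symm

lemma reach_merge {π : Equiv.Perm α} {a x y : α} (h : ¬ π.SameCycle a x)
    (hy : π.SameCycle a y) : (π * Equiv.swap a x).SameCycle a y := by
  obtain ⟨k, hk⟩ := sc_iff_pow.1 hy.symm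
  have hex : ∃ m : ℕ, (π ^ m) y = a := ⟨k, hk⟩
  classical
  have hmin : ∀ i < Nat.find hex, (π ^ i) y ≠ a ∧ (π ^ i) y ≠ x := by
    intro i hi
    refine ⟨Nat.find_min hex hi, fun hix => h (hy.trans ⟨(i : ℤ), by rw [zpow_natCast, hix]⟩)⟩
  have htr := traj (π := π) (a := a) (x := x) (y := y) hmin
  exact (sc_iff_pow.2 ⟨Nat.find hex, htr.trans (Nat.find_spec hex)⟩).symm

lemma merge_sc_xa {π : Equiv.Perm α} {a x : α} (h : ¬ π.SameCycle a x) :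
    (π * Equiv.swap a x).SameCycle x a := by
  have hx' : (π * Equiv.swap a x) x = π a := by
    simp [Equiv.Perm.mul_apply]
  by_cases hpa : π a = a
  · exact sc_iff_pow.2 ⟨1, by simp [hx', hpa]⟩
  · have h1 : (π * Equiv.swap a x).SameCycle a (π a) := reach_merge h ⟨1, by simp⟩
    have h2 : (π * Equiv.swap a x).SameCycle x (π a) := sc_iff_pow.2 ⟨1, by simp [hx']⟩
    exact h2.trans h1.symm

/-- In the merge case, the orbit of every point of `orb π a ∪ orb π x` under
`π * swap a x` is the whole union. -/
lemma merge_orb {π : Equiv.Perm α} {a x : α} (h : ¬ π.SameCycle a x) {y : α}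
    (hy : y ∈ orb π a ∪ orb π x) :
    orb (π * Equiv.swap a x) y = orb π a ∪ orb π x := by
  set π' := π * Equiv.swap a x with hπ'
  -- every element of S is in the π'-cycle of a
  have hAll : ∀ z ∈ orb π a ∪ orb π x, π'.SameCycle a z := by
    intro z hz
    rcases Finset.mem_union.1 hz with hz | hz
    · exact reach_merge h (mem_orb.1 hz)
    · have hz' : π.SameCycle x z := mem_orb.1 hz
      have : π'.SameCycle x z ∨ π'.SameCycle a z := by
        have := reach (x := a) hz'
        rwa [Equiv.swap_comm x a] at this
      rcases this with h1 | h1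
      · exact (merge_sc_xa h).symm.trans h1
      · exact h1
  -- S is invariant under π'
  have hInv : ∀ z ∈ orb π a ∪ orb π x, π' z ∈ orb π a ∪ orb π x := by
    intro z hz
    have hz2 : Equiv.swap a x z ∈ orb π a ∪ orb π x := by
      rcases eq_or_ne z a with rfl | hza
      · rw [Equiv.swap_apply_left]
        exact Finset.mem_union_right _ (self_mem_orb π x)
      rcases eq_or_ne z x with rfl | hzx
      · rw [Equiv.swap_apply_right]
        exact Finset.mem_union_left _ (self_mem_orb π a)
      · rwa [Equiv.swap_apply_of_ne_of_ne hza hzx]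
    have : ∀ w ∈ orb π a ∪ orb π x, π w ∈ orb π a ∪ orb π x := by
      intro w hw
      rcases Finset.mem_union.1 hw with hw | hw
      · exact Finset.mem_union_left _ (mem_orb.2 ((mem_orb.1 hw).trans ⟨1, by simp⟩))
      · exact Finset.mem_union_right _ (mem_orb.2 ((mem_orb.1 hw).trans ⟨1, by simp⟩))
    exact this _ hz2
  have hsub : orb π' a ⊆ orb π a ∪ orb π x := by
    intro z hz
    obtain ⟨k, hk⟩ := sc_iff_pow.1 (mem_orb.1 hz)
    have : ∀ m : ℕ, (π' ^ m) a ∈ orb π a ∪ orb π x := by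
      intro m
      induction m with
      | zero => exact Finset.mem_union_left _ (self_mem_orb π a)
      | succ m ih =>
        rw [pow_succ']
        exact hInv _ ih
    rw [← hk]
    exact this k
  have horb : orb π' y = orb π' a := (orb_eq_of_sc (hAll y hy)).symm
  rw [horb]
  apply Finset.Subset.antisymm hsub
  intro z hz
  exact mem_orb.2 (hAll z hz)


lemma offS_image {π : Equiv.Perm α} {a x : α} (S : Finset α)
    (hS : ∀ y, y ∉ S → ¬ π.SameCycle y a ∧ ¬ π.SameCycle y x) :
    (Finset.univ \ S).image (orb (π * Equiv.swap a x)) = (Finset.univ \ S).image (orb π) := by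
  apply Finset.image_congr
  intro y hy
  simp only [Finset.coe_sdiff, Set.mem_diff, Finset.mem_coe] at hy
  exact orb_mul_swap_of_not_mem (hS y hy.2).1 (hS y hy.2).2

lemma gcount_merge {π : Equiv.Perm α} {a x : α} (h : ¬ π.SameCycle a x) :
    gcount (π * Equiv.swap a x) + 1 ≤ gcount π := by
  classical
  set π' := π * Equiv.swap a x with hπ'
  set S : Finset α := orb π a ∪ orb π x with hS
  have hSnotmem : ∀ y, y ∉ S → ¬ π.SameCycle y a ∧ ¬ π.SameCycle y x := by
    intro y hy
    simp only [hS, Finset.mem_union, mem_orb, not_or] at hy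
    exact ⟨fun hc => hy.1 hc.symm, fun hc => hy.2 hc.symm⟩
  have hsplit : ∀ ρ : Equiv.Perm α,
      Finset.univ.image (orb ρ) = (Finset.univ \ S).image (orb ρ) ∪ S.image (orb ρ) := by
    intro ρ
    rw [← Finset.image_union, Finset.sdiff_union_of_subset (Finset.subset_univ S)]
  set M : Finset (Finset α) := (Finset.univ \ S).image (orb π) with hM
  have haS : a ∈ S := Finset.mem_union_left _ (self_mem_orb π a)
  have hxS : x ∈ S := Finset.mem_union_right _ (self_mem_orb π x)
  -- gcount π'
  have h1 : S.image (orb π') = {S} := by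
    have : S.image (orb π') = S.image (fun _ => S) := by
      apply Finset.image_congr
      intro y hy
      exact merge_orb h hy
    rw [this, Finset.image_const ⟨a, haS⟩]
  have hg' : gcount π' ≤ M.card + 1 := by
    unfold gcount
    rw [hsplit π', h1, offS_image S hSnotmem, ← hM]
    exact (Finset.card_union_le _ _).trans (by simp)
  -- gcount π
  have h2 : S.image (orb π) = {orb π a, orb π x} := by
    apply Finset.Subset.antisymm
    · intro T hT
      obtain ⟨y, hy, rfl⟩ := Finset.mem_image.1 hT
      rcases Finset.mem_union.1 hy with hy | hy
      · simp [orb_eq_of_sc (mem_orb.1 hy)]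
      · simp [orb_eq_of_sc (mem_orb.1 hy)]
    · intro T hT
      rcases Finset.mem_insert.1 hT with rfl | hT
      · exact Finset.mem_image.2 ⟨a, haS, rfl⟩
      · rw [Finset.mem_singleton.1 hT]
        exact Finset.mem_image.2 ⟨x, hxS, rfl⟩
  have hoaox : orb π a ≠ orb π x := by
    intro he
    exact h (mem_orb.1 (he ▸ self_mem_orb π x)).symm.symm
  have hnM : ∀ y : α, π.SameCycle a y ∨ π.SameCycle x y → orb π y ∉ M := by
    intro y hy hmem
    obtain ⟨z, hz, hze⟩ := Finset.mem_image.1 hmem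
    have hzS : z ∉ S := (Finset.mem_sdiff.1 hz).2
    have hzorb : z ∈ orb π y := hze ▸ self_mem_orb π z
    rcases hy with hy | hy
    · exact hzS (Finset.mem_union_left _ (mem_orb.2 (hy.trans (mem_orb.1 hzorb))))
    · exact hzS (Finset.mem_union_right _ (mem_orb.2 (hy.trans (mem_orb.1 hzorb))))
  have hg : gcount π = M.card + 2 := by
    unfold gcount
    rw [hsplit π, h2, ← hM]
    rw [Finset.union_comm]
    rw [Finset.card_union_of_disjoint]
    · have : ({orb π a, orb π x} : Finset (Finset α)).card = 2 := by
        rw [Finset.card_insert_of_notMem (by simpa using hoaox), Finset.card_singleton]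
      omega
    · rw [Finset.disjoint_left]
      intro T hT hTM
      rcases Finset.mem_insert.1 hT with rfl | hT
      · exact hnM a (Or.inl (Equiv.Perm.SameCycle.refl _ _)) hTM
      · rw [Finset.mem_singleton.1 hT] at hTM
        exact hnM x (Or.inr (Equiv.Perm.SameCycle.refl _ _)) hTM
  omega

lemma gcount_split {π : Equiv.Perm α} {a x : α} (h : π.SameCycle a x) :
    gcount (π * Equiv.swap a x) ≤ gcount π + 1 := by
  classical
  set π' := π * Equiv.swap a x with hπ'
  set S : Finset α := orb π a with hS
  have hSnotmem : ∀ y, y ∉ S → ¬ π.SameCycle y a ∧ ¬ π.SameCycle y x := by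
    intro y hy
    simp only [hS, mem_orb] at hy
    exact ⟨fun hc => hy hc.symm, fun hc => hy (hc.trans h.symm).symm⟩
  have hsplit : ∀ ρ : Equiv.Perm α,
      Finset.univ.image (orb ρ) = (Finset.univ \ S).image (orb ρ) ∪ S.image (orb ρ) := by
    intro ρ
    rw [← Finset.image_union, Finset.sdiff_union_of_subset (Finset.subset_univ S)]
  set M : Finset (Finset α) := (Finset.univ \ S).image (orb π) with hM
  have haS : a ∈ S := self_mem_orb π a
  have h1 : S.image (orb π') ⊆ {orb π' a, orb π' x} := by
    intro T hT
    obtain ⟨y, hy, rfl⟩ := Finset.mem_image.1 hT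
    rcases reach (x := x) (mem_orb.1 hy) with h2 | h2
    · simp [hπ', orb_eq_of_sc h2]
    · simp [hπ', orb_eq_of_sc h2]
  have hg' : gcount π' ≤ M.card + 2 := by
    unfold gcount
    rw [hsplit π', offS_image S hSnotmem, ← hM]
    refine (Finset.card_union_le _ _).trans ?_
    have := Finset.card_le_card h1
    have h2 : ({orb π' a, orb π' x} : Finset (Finset α)).card ≤ 2 :=
      (Finset.card_insert_le _ _).trans (by simp)
    omega
  have h2 : S.image (orb π) = {S} := by
    have : S.image (orb π) = S.image (fun _ => S) := by
      apply Finset.image_congr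
      intro y hy
      exact (orb_eq_of_sc (mem_orb.1 hy)).symm
    rw [this, Finset.image_const ⟨a, haS⟩]
  have hSM : S ∉ M := by
    intro hmem
    obtain ⟨z, hz, hze⟩ := Finset.mem_image.1 hmem
    exact (Finset.mem_sdiff.1 hz).2 (hze ▸ self_mem_orb π z)
  have hg : gcount π = M.card + 1 := by
    unfold gcount
    rw [hsplit π, h2, ← hM, Finset.union_comm,
      Finset.card_union_of_disjoint (by simpa using hSM)]
    simp [Nat.add_comm]
  omega


def psi (O : Finset α) (π : Equiv.Perm α) : ℤ :=
  2 * (π.support.card : ℤ) + (gcount π : ℤ) - 2 * ((π.support ∩ O).card : ℤ)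
    - (Fintype.card α : ℤ)

lemma card_pair_split (s : Finset α) {a x : α} (hax : a ≠ x) :
    (s.card : ℤ) = ((s \ {a, x}).card : ℤ)
      + (if a ∈ s then 1 else 0) + (if x ∈ s then 1 else 0) := by
  classical
  have h := Finset.card_sdiff_add_card_inter s {a, x}
  have h2 : (s ∩ ({a, x} : Finset α)).card
      = (if a ∈ s then 1 else 0) + (if x ∈ s then 1 else 0) := by
    have he : s ∩ ({a, x} : Finset α) = ({a, x} : Finset α).filter (· ∈ s) := by
      ext y
      simp [Finset.mem_filter, and_comm]
    rw [he, Finset.filter_insert, Finset.filter_singleton]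
    split_ifs with h1 h2 h2
    · rw [Finset.card_insert_of_notMem (by simp [hax])]
      simp
    · simp
    · simp
    · simp
  rw [h2] at h
  push_cast [← h]
  ring

lemma supp_off_pair (π : Equiv.Perm α) (a x : α) :
    π.support \ {a, x} = (π * Equiv.swap a x).support \ {a, x} := by
  ext y
  by_cases hya : y = a
  · simp [hya]
  by_cases hyx : y = x
  · simp [hyx]
  simp [Finset.mem_sdiff, Equiv.Perm.mem_support, hya, hyx, Equiv.Perm.mul_apply,
    Equiv.swap_apply_of_ne_of_ne hya hyx]

lemma inter_sdiff_eq {s t : Finset α} (O p : Finset α) (h : s \ p = t \ p) :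
    (s ∩ O) \ p = (t ∩ O) \ p := by
  ext y
  have hy := Finset.ext_iff.1 h y
  simp only [Finset.mem_sdiff, Finset.mem_inter] at *
  tauto

lemma sc_of_fixed {π : Equiv.Perm α} {a x : α} (hfix : π a = a) (h : π.SameCycle a x) :
    x = a := by
  obtain ⟨k, hk⟩ := sc_iff_pow.1 h
  rw [Equiv.Perm.pow_apply_eq_self_of_apply_eq_self hfix] at hk
  exact hk.symm

lemma psi_mul_swap_le (O : Finset α) {π : Equiv.Perm α} {a x : α} (hax : a ≠ x)
    (hxO : x ∈ O) :
    psi O (π * Equiv.swap a x) ≤ psi O π + 1 := by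
  classical
  set π' := π * Equiv.swap a x with hπ'
  have hsupp := supp_off_pair π a x
  have hsuppO := inter_sdiff_eq O ({a, x} : Finset α) hsupp
  have e1 := card_pair_split π.support hax
  have e2 := card_pair_split π'.support hax
  have e3 := card_pair_split (π.support ∩ O) hax
  have e4 := card_pair_split (π'.support ∩ O) hax
  rw [hsupp] at e1
  rw [hsuppO] at e3
  simp only [← hπ'] at e1 e3
  have hx3 : (if x ∈ π.support ∩ O then (1:ℤ) else 0) = (if x ∈ π.support then 1 else 0) := by
    by_cases hx : x ∈ π.support <;> simp [Finset.mem_inter, hx, hxO]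
  have hx4 : (if x ∈ π'.support ∩ O then (1:ℤ) else 0) = (if x ∈ π'.support then 1 else 0) := by
    by_cases hx : x ∈ π'.support <;> simp [Finset.mem_inter, hx, hxO]
  rw [hx3] at e3
  rw [hx4] at e4
  have hIa : (0:ℤ) ≤ (if a ∈ π.support then (1:ℤ) else 0) ∧
      (if a ∈ π.support then (1:ℤ) else 0) ≤ 1 := by
    split_ifs <;> norm_num
  have hIa' : (0:ℤ) ≤ (if a ∈ π'.support then (1:ℤ) else 0) ∧
      (if a ∈ π'.support then (1:ℤ) else 0) ≤ 1 := by
    split_ifs <;> norm_num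
  have g3 : (0:ℤ) ≤ (if a ∈ π.support ∩ O then (1:ℤ) else 0) := by positivity
  have g4 : (0:ℤ) ≤ (if a ∈ π'.support ∩ O then (1:ℤ) else 0) := by positivity
  have g3' : (if a ∈ π.support ∩ O then (1:ℤ) else 0) ≤ (if a ∈ π.support then 1 else 0) := by
    by_cases h5 : a ∈ π.support ∩ O
    · rw [if_pos h5, if_pos (Finset.mem_inter.1 h5).1]
    · rw [if_neg h5]
      exact hIa.1
  have g4' : (if a ∈ π'.support ∩ O then (1:ℤ) else 0) ≤ (if a ∈ π'.support then 1 else 0) := by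
    by_cases h5 : a ∈ π'.support ∩ O
    · rw [if_pos h5, if_pos (Finset.mem_inter.1 h5).1]
    · rw [if_neg h5]
      exact hIa'.1
  rcases em (π.SameCycle a x) with hsc | hsc
  · -- split case
    have hg : (gcount π' : ℤ) ≤ (gcount π : ℤ) + 1 := by
      exact_mod_cast gcount_split hsc
    have hπa : π a ≠ a := fun hf => hax (sc_of_fixed hf hsc).symm
    have has : a ∈ π.support := Equiv.Perm.mem_support.2 hπa
    by_cases haO : a ∈ O
    · have h3 : (if a ∈ π.support ∩ O then (1:ℤ) else 0) = (if a ∈ π.support then 1 else 0) := by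
        by_cases h5 : a ∈ π.support <;> simp [Finset.mem_inter, h5, haO]
      have h4 : (if a ∈ π'.support ∩ O then (1:ℤ) else 0) = (if a ∈ π'.support then 1 else 0) := by
        by_cases h5 : a ∈ π'.support <;> simp [Finset.mem_inter, h5, haO]
      rw [h3] at e3
      rw [h4] at e4
      simp only [psi]
      linarith
    · have h3 : (if a ∈ π.support ∩ O then (1:ℤ) else 0) = 0 := by
        simp [Finset.mem_inter, haO]
      have h4 : (if a ∈ π'.support ∩ O then (1:ℤ) else 0) = 0 := by
        simp [Finset.mem_inter, haO]
      rw [h3] at e3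
      rw [h4] at e4
      simp only [psi]
      rw [if_pos has] at e1
      linarith [hIa'.2]
  · -- merge case
    have hg : (gcount π' : ℤ) + 1 ≤ (gcount π : ℤ) := by
      exact_mod_cast gcount_merge hsc
    simp only [psi]
    linarith [hIa.1, hIa'.2]


lemma threecycle_decomp {c : Equiv.Perm α} (hcy : c.IsCycle) (h3 : c.support.card = 3)
    {x : α} (hx : x ∈ c.support) :
    c = Equiv.swap (c (c x)) x * Equiv.swap (c x) x ∧ c (c x) ≠ x ∧ c x ≠ x := by
  have hcx : c x ≠ x := Equiv.Perm.mem_support.1 hx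
  have hord : orderOf c = 3 := by rw [hcy.orderOf, h3]
  have hc3 : c ^ 3 = 1 := by rw [← hord]; exact pow_orderOf_eq_one c
  have hc3x : c (c (c x)) = x := by
    have := Equiv.Perm.ext_iff.1 hc3 x
    simpa [pow_succ, Equiv.Perm.mul_apply] using this
  have hccx : c (c x) ≠ x := by
    intro hf
    apply hcx
    have : c (c (c x)) = c x := by rw [hf]
    rw [hc3x] at this
    exact this.symm
  have hccx2 : c (c x) ≠ c x := fun hf => hcx (c.injective hf)
  refine ⟨?_, hccx, hcx⟩
  have hsupp : c.support = {x, c x, c (c x)} := by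
    have hsub : ({x, c x, c (c x)} : Finset α) ⊆ c.support := by
      intro y hy
      simp only [Finset.mem_insert, Finset.mem_singleton] at hy
      rcases hy with rfl | rfl | rfl
      · exact hx
      · exact Equiv.Perm.mem_support.2 (fun hf => hcx (c.injective hf))
      · exact Equiv.Perm.mem_support.2 (by rw [hc3x]; exact Ne.symm hccx)
    have hcard : ({x, c x, c (c x)} : Finset α).card = 3 := by
      rw [Finset.card_insert_of_notMem (by
          intro hm
          rcases Finset.mem_insert.1 hm with h | h
          · exact hcx h.symm
          · exact hccx (Finset.mem_singleton.1 h).symm),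
        Finset.card_insert_of_notMem (by
          intro hm
          exact hccx2 (Finset.mem_singleton.1 hm).symm), Finset.card_singleton]
    exact (Finset.eq_of_subset_of_card_le hsub (by rw [h3, hcard])).symm
  ext y
  by_cases h1 : y = x
  · subst h1
    rw [Equiv.Perm.mul_apply, Equiv.swap_apply_right,
      Equiv.swap_apply_of_ne_of_ne hccx2.symm hcx]
  by_cases h2 : y = c x
  · subst h2
    rw [Equiv.Perm.mul_apply, Equiv.swap_apply_left, Equiv.swap_apply_right]
  by_cases h5 : y = c (c x)
  · subst h5
    rw [hc3x, Equiv.Perm.mul_apply,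
      Equiv.swap_apply_of_ne_of_ne (fun hf => hccx2 hf) (fun hf => hccx hf),
      Equiv.swap_apply_left]
  · have hy : y ∉ c.support := by
      rw [hsupp]
      simp [h1, h2, h5]
    rw [Equiv.Perm.notMem_support.1 hy, Equiv.Perm.mul_apply,
      Equiv.swap_apply_of_ne_of_ne h2 h1, Equiv.swap_apply_of_ne_of_ne h5 h1]

lemma psi_mul_threecycle_le (O : Finset α) (π : Equiv.Perm α) {c : Equiv.Perm α}
    (hcy : c.IsCycle) (h3 : c.support.card = 3) {x : α} (hx : x ∈ c.support) (hxO : x ∈ O) :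
    psi O (π * c) ≤ psi O π + 2 := by
  obtain ⟨hdec, h1, h2⟩ := threecycle_decomp hcy h3 hx
  set u := c x with hu
  set v := c u with hv
  calc psi O (π * c) = psi O (π * Equiv.swap v x * Equiv.swap u x) := by
        rw [hdec, mul_assoc]
    _ ≤ psi O (π * Equiv.swap v x) + 1 := psi_mul_swap_le O h2 hxO
    _ ≤ psi O π + 1 + 1 := by linarith [psi_mul_swap_le O (π := π) h1 hxO]
    _ = psi O π + 2 := by ring

lemma gcount_one : gcount (1 : Equiv.Perm α) = Fintype.card α := by
  unfold gcount
  have : ∀ y : α, orb (1 : Equiv.Perm α) y = {y} := by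
    intro y
    ext z
    simp [mem_orb, Equiv.Perm.sameCycle_one, eq_comm]
  rw [Finset.image_congr (fun y _ => this y)]
  rw [Finset.card_image_of_injective _ Finset.singleton_injective, Finset.card_univ]

lemma psi_one (O : Finset α) : psi O (1 : Equiv.Perm α) = 0 := by
  simp [psi, gcount_one]

lemma psi_inv (O : Finset α) (π : Equiv.Perm α) : psi O π⁻¹ = psi O π := by
  have h1 : π⁻¹.support = π.support := Equiv.Perm.support_inv π
  have h2 : gcount π⁻¹ = gcount π := by
    unfold gcount
    congr 1
    apply Finset.image_congr
    intro y _
    ext z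
    simp [mem_orb, Equiv.Perm.sameCycle_inv]
  rw [psi, psi, h1, h2]

lemma psi_prod_le (O : Finset α) (cs : List (Equiv.Perm α))
    (hc : ∀ c ∈ cs, c.IsCycle ∧ c.support.card = 3 ∧ ∃ x ∈ c.support, x ∈ O) :
    psi O cs.prod ≤ 2 * cs.length := by
  induction cs using List.reverseRecOn with
  | nil => simp [psi_one]
  | append_singleton l c ih =>
    have hcl : ∀ c' ∈ l, c'.IsCycle ∧ c'.support.card = 3 ∧ ∃ x ∈ c'.support, x ∈ O :=
      fun c' h => hc c' (List.mem_append_left _ h)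
    obtain ⟨h1, h2, x, hx, hxO⟩ := hc c (List.mem_append_right _ (List.mem_singleton_self c))
    rw [List.prod_append, List.prod_singleton]
    have := psi_mul_threecycle_le O l.prod h1 h2 hx hxO
    have hl := ih hcl
    rw [List.length_append, List.length_singleton]
    push_cast
    push_cast at hl
    linarith


lemma gcount_eq (π : Equiv.Perm α) :
    gcount π = π.cycleFactorsFinset.card + (Finset.univ \ π.support).card := by
  classical
  have hsplit : Finset.univ.image (orb π)
      = (Finset.univ \ π.support).image (orb π) ∪ π.support.image (orb π) := by
    rw [← Finset.image_union, Finset.sdiff_union_of_subset (Finset.subset_univ _)]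
  have hfixorb : ∀ y ∈ Finset.univ \ π.support, orb π y = {y} := by
    intro y hy
    have hfy : π y = y := Equiv.Perm.notMem_support.1 (Finset.mem_sdiff.1 hy).2
    ext z
    simp only [mem_orb, Finset.mem_singleton]
    constructor
    · intro h
      exact (sc_of_fixed hfy h).symm ▸ rfl
    · rintro rfl
      exact Equiv.Perm.SameCycle.refl _ _
  have himg1 : ((Finset.univ \ π.support).image (orb π)).card
      = (Finset.univ \ π.support).card := by
    rw [Finset.image_congr (fun y hy => hfixorb y (by simpa using hy))]
    exact Finset.card_image_of_injective _ Finset.singleton_injective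
  have hmov : ∀ y ∈ π.support, orb π y = (π.cycleOf y).support := by
    intro y hy
    ext z
    rw [mem_orb, Equiv.Perm.mem_support_cycleOf_iff]
    exact ⟨fun h => ⟨h, hy⟩, fun h => h.1⟩
  have himg2 : π.support.image (orb π)
      = π.cycleFactorsFinset.image Equiv.Perm.support := by
    apply Finset.Subset.antisymm
    · intro T hT
      obtain ⟨y, hy, rfl⟩ := Finset.mem_image.1 hT
      exact Finset.mem_image.2 ⟨π.cycleOf y,
        Equiv.Perm.cycleOf_mem_cycleFactorsFinset_iff.2 hy, (hmov y hy).symm⟩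
    · intro T hT
      obtain ⟨c, hcmem, rfl⟩ := Finset.mem_image.1 hT
      have hcy : c.IsCycle := (Equiv.Perm.mem_cycleFactorsFinset_iff.1 hcmem).1
      obtain ⟨y, hy⟩ := hcy.nonempty_support
      have hysupp : y ∈ π.support := Equiv.Perm.mem_cycleFactorsFinset_support_le hcmem hy
      have hcville : c = π.cycleOf y := Equiv.Perm.cycle_is_cycleOf hy hcmem
      exact Finset.mem_image.2 ⟨y, hysupp, by rw [hmov y hysupp, hcville]⟩
  have himg2card : (π.cycleFactorsFinset.image Equiv.Perm.support).card
      = π.cycleFactorsFinset.card := by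
    apply Finset.card_image_of_injOn
    intro c1 h1 c2 h2 he
    obtain ⟨y, hy⟩ := (Equiv.Perm.mem_cycleFactorsFinset_iff.1 h1).1.nonempty_support
    have hy2 : y ∈ c2.support := he ▸ hy
    rw [Equiv.Perm.cycle_is_cycleOf hy h1, Equiv.Perm.cycle_is_cycleOf hy2 h2]
  have hdisj : Disjoint ((Finset.univ \ π.support).image (orb π))
      (π.support.image (orb π)) := by
    rw [Finset.disjoint_left]
    intro T hT1 hT2
    obtain ⟨y, hy, rfl⟩ := Finset.mem_image.1 hT1
    obtain ⟨z, hz, hze⟩ := Finset.mem_image.1 hT2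
    rw [hfixorb y hy] at hze
    have hcard : (π.cycleOf z).support.card ≤ 1 := by
      rw [← hmov z hz, hze]
      simp
    have hcy : (π.cycleOf z).IsCycle := Equiv.Perm.isCycle_cycleOf π (Equiv.Perm.mem_support.1 hz)
    exact absurd (hcy.two_le_card_support.trans hcard) (by norm_num)
  unfold gcount
  rw [hsplit, Finset.card_union_of_disjoint hdisj, himg1, himg2, himg2card, Nat.add_comm]

end Stmt17Aux

theorem stmt17 (n r d : ℕ) (hd : 1 ≤ d) (σ : Equiv.Perm (Fin (n + d)))
    (hfix : ∀ i : Fin (n + d), n ≤ i.val → σ i = i)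
    (hsupp : σ.support.card = n) (hcyc : σ.cycleType.card = r)
    (cs : List (Equiv.Perm (Fin (n + d))))
    (hprod : cs.prod = σ⁻¹)
    (hc : ∀ c ∈ cs, c.IsCycle ∧ c.support.card = 3 ∧
      ∃ i : Fin (n + d), n ≤ i.val ∧ i ∈ c.support) :
    n + r ≤ 2 * cs.length := by
  classical
  set O : Finset (Fin (n + d)) := Finset.univ.filter (fun i => n ≤ i.val) with hO
  have hpsi : Stmt17Aux.psi O cs.prod ≤ 2 * cs.length := by
    apply Stmt17Aux.psi_prod_le
    intro c hcmem
    obtain ⟨h1, h2, i, hi, hmem⟩ := hc c hcmem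
    exact ⟨h1, h2, i, hmem, Finset.mem_filter.2 ⟨Finset.mem_univ _, hi⟩⟩
  rw [hprod, Stmt17Aux.psi_inv] at hpsi
  have hsO : σ.support ∩ O = ∅ := by
    ext y
    simp only [Finset.mem_inter, Finset.mem_filter, Equiv.Perm.mem_support, hO,
      Finset.notMem_empty, iff_false, not_and, Finset.mem_univ, true_and]
    intro hy hny
    exact hy (hfix y hny)
  have h1 : σ.cycleFactorsFinset.card = r := by
    have h := hcyc
    rwa [Equiv.Perm.cycleType_def, Multiset.card_map] at h
  have h2 : (Finset.univ \ σ.support).card = d := by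
    rw [Finset.card_sdiff_of_subset (Finset.subset_univ _), Finset.card_univ, hsupp, Fintype.card_fin]
    omega
  have hg : Stmt17Aux.gcount σ = r + d := by
    rw [Stmt17Aux.gcount_eq, h1, h2]
  have hpsiσ : Stmt17Aux.psi O σ = (n : ℤ) + r := by
    rw [Stmt17Aux.psi, hsupp, hsO, hg, Fintype.card_fin]
    push_cast [Finset.card_empty]
    ring
  rw [hpsiσ] at hpsi
  exact_mod_cast hpsi
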